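/- Under the shared series setup, for every q ∈ ℕ^n the power series x ↦ Σ_{k=0}^∞ α_k(q)·x^k has infinite radius of convergence; in particular, for every T ∈ ℝ the function G(t,q) := Σ_{k=0}^∞ α_k(q)·(T−t)^k is well defined and analytic in t on all of ℝ. -/

import Mathlib

/-- The coefficients `α_k(q) = (1/k!)·Σ_{|j|=k} (Π_i h_i^{j_i})·d(q+j)` of the series
expansion of the transformed value function. -/
noncomputable def alphaC {n : ℕ} (h : Fin n → ℝ) (d : (Fin n → ℕ) → ℝ)
    (k : ℕ) (q : Fin n → ℕ) : ℝ :=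
  (1 / (Nat.factorial k : ℝ)) *
    ∑ j ∈ Finset.Nat.antidiagonalTuple n k, (∏ i, h i ^ j i) * d (q + j)

lemma alphaC_bound {n : ℕ} (h : Fin n → ℝ) (hh : ∀ i, 0 ≤ h i)
    (d : (Fin n → ℕ) → ℝ) (M : ℝ) (hd : ∀ q, |d q| ≤ M) (k : ℕ) (q : Fin n → ℕ) :
    |alphaC h d k q| ≤ M * (∑ i, h i) ^ k / k.factorial := by
  have hM : 0 ≤ M := le_trans (abs_nonneg _) (hd q)
  have key : ∑ j ∈ Finset.Nat.antidiagonalTuple n k, (∏ i, h i ^ j i) ≤ (∑ i, h i) ^ k := by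
    rw [Finset.sum_pow_eq_sum_piAntidiag Finset.univ h k,
      Finset.piAntidiag_univ_fin_eq_antidiagonalTuple k n]
    refine Finset.sum_le_sum fun j hj => ?_
    have h1 : (1 : ℝ) ≤ (Nat.multinomial Finset.univ j : ℝ) := by
      exact_mod_cast Nat.one_le_iff_ne_zero.2 (Nat.multinomial_pos _ _).ne'
    calc ∏ i, h i ^ j i = 1 * ∏ i, h i ^ j i := (one_mul _).symm
      _ ≤ (Nat.multinomial Finset.univ j : ℝ) * ∏ i, h i ^ j i :=
        mul_le_mul_of_nonneg_right h1
          (Finset.prod_nonneg fun i _ => pow_nonneg (hh i) _)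
  have hS : |∑ j ∈ Finset.Nat.antidiagonalTuple n k, (∏ i, h i ^ j i) * d (q + j)|
      ≤ M * (∑ i, h i) ^ k := by
    calc |∑ j ∈ Finset.Nat.antidiagonalTuple n k, (∏ i, h i ^ j i) * d (q + j)|
        ≤ ∑ j ∈ Finset.Nat.antidiagonalTuple n k, |(∏ i, h i ^ j i) * d (q + j)| :=
          Finset.abs_sum_le_sum_abs _ _
      _ ≤ ∑ j ∈ Finset.Nat.antidiagonalTuple n k, (∏ i, h i ^ j i) * M := by
          refine Finset.sum_le_sum fun j _ => ?_
          rw [abs_mul, abs_of_nonneg (Finset.prod_nonneg fun i _ => pow_nonneg (hh i) _)]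
          exact mul_le_mul_of_nonneg_left (hd _)
            (Finset.prod_nonneg fun i _ => pow_nonneg (hh i) _)
      _ = (∑ j ∈ Finset.Nat.antidiagonalTuple n k, ∏ i, h i ^ j i) * M := by
          rw [Finset.sum_mul]
      _ ≤ (∑ i, h i) ^ k * M := mul_le_mul_of_nonneg_right key hM
      _ = M * (∑ i, h i) ^ k := mul_comm _ _
  rw [alphaC, abs_mul, abs_of_nonneg (by positivity : (0:ℝ) ≤ 1 / (k.factorial : ℝ))]
  calc (1 / (k.factorial : ℝ)) * |∑ j ∈ Finset.Nat.antidiagonalTuple n k,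
        (∏ i, h i ^ j i) * d (q + j)|
      ≤ (1 / (k.factorial : ℝ)) * (M * (∑ i, h i) ^ k) :=
        mul_le_mul_of_nonneg_left hS (by positivity)
    _ = M * (∑ i, h i) ^ k / k.factorial := by ring

/-- Under the shared series setup, the power series `Σ_k α_k(q)·x^k` has infinite radius
of convergence; in particular `G(t,q) = Σ_k α_k(q)(T−t)^k` is well defined and analytic
in `t` on all of `ℝ`. -/
theorem stmt13 {n : ℕ} (hn : 1 ≤ n) (h : Fin n → ℝ) (hh : ∀ i, 0 ≤ h i)
    (d : (Fin n → ℕ) → ℝ) (M : ℝ) (hM : 0 ≤ M) (hd : ∀ q, |d q| ≤ M)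
    (q : Fin n → ℕ) :
    (∀ x : ℝ, Summable fun k => alphaC h d k q * x ^ k) ∧
    (∀ T : ℝ, ∀ t : ℝ, AnalyticAt ℝ (fun t : ℝ => ∑' k, alphaC h d k q * (T - t) ^ k) t) := by
  have hbd : ∀ (x : ℝ) (k : ℕ), |alphaC h d k q * x ^ k| ≤
      M * ((∑ i, h i) * |x|) ^ k / k.factorial := by
    intro x k
    calc |alphaC h d k q * x ^ k| = |alphaC h d k q| * |x| ^ k := by rw [abs_mul, abs_pow]
      _ ≤ (M * (∑ i, h i) ^ k / k.factorial) * |x| ^ k :=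
          mul_le_mul_of_nonneg_right (alphaC_bound h hh d M hd k q)
            (pow_nonneg (abs_nonneg _) _)
      _ = M * ((∑ i, h i) * |x|) ^ k / k.factorial := by rw [mul_pow]; ring
  have hsumaux : ∀ x : ℝ, Summable fun k => M * ((∑ i, h i) * |x|) ^ k / k.factorial := by
    intro x
    simpa [mul_div_assoc] using (Real.summable_pow_div_factorial ((∑ i, h i) * |x|)).mul_left M
  have hsum : ∀ x : ℝ, Summable fun k => alphaC h d k q * x ^ k := fun x =>
    Summable.of_norm_bounded (hsumaux x) fun k => by
      rw [Real.norm_eq_abs]; exact hbd x k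
  refine ⟨hsum, ?_⟩
  set p : FormalMultilinearSeries ℝ ℝ ℝ :=
    fun k => alphaC h d k q • ContinuousMultilinearMap.mkPiAlgebraFin ℝ k ℝ with hp
  have hpapp : ∀ (k : ℕ) (x : ℝ), p k (fun _ => x) = alphaC h d k q * x ^ k := by
    intro k x
    simp [hp, ContinuousMultilinearMap.mkPiAlgebraFin_apply, List.prod_ofFn]
  have hpnorm : ∀ k, ‖p k‖ = |alphaC h d k q| := by
    intro k
    show ‖alphaC h d k q • ContinuousMultilinearMap.mkPiAlgebraFin ℝ k ℝ‖ = _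
    rw [norm_smul (β := ContinuousMultilinearMap ℝ (fun _ : Fin k => ℝ) ℝ),
      ContinuousMultilinearMap.norm_mkPiAlgebraFin, mul_one, Real.norm_eq_abs]
  have hrad : p.radius = ⊤ := by
    apply p.radius_eq_top_of_summable_norm
    intro r
    simp only [hpnorm]
    refine Summable.of_norm_bounded (hsumaux r) fun k => ?_
    rw [Real.norm_eq_abs, abs_mul, abs_abs, abs_pow, NNReal.abs_eq]
    calc |alphaC h d k q| * (r:ℝ) ^ k ≤ (M * (∑ i, h i) ^ k / k.factorial) * (r:ℝ) ^ k :=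
          mul_le_mul_of_nonneg_right (alphaC_bound h hh d M hd k q) (pow_nonneg r.coe_nonneg _)
      _ = M * ((∑ i, h i) * r) ^ k / k.factorial := by rw [mul_pow]; ring
  have hball : HasFPowerSeriesOnBall p.sum p 0 p.radius :=
    p.hasFPowerSeriesOnBall (by rw [hrad]; exact ENNReal.zero_lt_top)
  have hgana : ∀ y : ℝ, AnalyticAt ℝ p.sum y := by
    intro y
    have := hball.analyticOnNhd
    rw [hrad] at this
    exact this y (by simp)
  have hsumeq : ∀ x : ℝ, p.sum x = ∑' k, alphaC h d k q * x ^ k := by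
    intro x
    unfold FormalMultilinearSeries.sum
    exact tsum_congr fun k => hpapp k x
  intro T t
  have heq : (fun t : ℝ => ∑' k, alphaC h d k q * (T - t) ^ k) = fun t => p.sum (T - t) := by
    funext s; rw [hsumeq]
  rw [heq]
  exact (hgana (T - t)).comp ((analyticAt_const).sub (analyticAt_id))
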